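/- arXiv:0909.5319 — 2 statements merged into one kernel-verified Lean document; each statement's English description precedes it below -/
import Mathlib

section
/- For every integer d ≥ 2, the formal power series (1 − yz)·(1 − Q_d)⁻¹ in ℤ[[y,z]] has all coefficients nonnegative, where Q_d = Σ_{i,j ≥ 1} C(d, i+j) yⁱzʲ. (In particular Q_d − yz ≥ 0, since the coefficient of yz in Q_d is C(d,2) ≥ 1.) -/
open MvPowerSeries

/-- `Q_d = Σ_{i,j ≥ 1} C(d, i+j) yⁱzʲ` as a power series in `ℤ[[y,z]]`
(`y = X 0`, `z = X 1`). -/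
def Q (d : ℕ) : MvPowerSeries (Fin 2) ℤ :=
  fun e => if 1 ≤ e 0 ∧ 1 ≤ e 1 then (d.choose (e 0 + e 1) : ℤ) else 0

lemma coeff_Q (d : ℕ) (e : Fin 2 →₀ ℕ) :
    coeff e (Q d) = if 1 ≤ e 0 ∧ 1 ≤ e 1 then (d.choose (e 0 + e 1) : ℤ) else 0 := rfl

lemma Q_nonneg (d : ℕ) (e : Fin 2 →₀ ℕ) : 0 ≤ coeff e (Q d) := by
  rw [coeff_Q]; split <;> positivity

lemma constantCoeff_Q (d : ℕ) : constantCoeff (Q d) = 0 := by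
  show coeff 0 (Q d) = 0
  rw [coeff_Q]; simp

/-- For `d ≥ 2`, the series `Q_d - yz` has nonnegative coefficients, and the series
`(1 - yz)·(1 - Q_d)⁻¹` has nonnegative coefficients (`1 - Q_d` is a unit of
`ℤ[[y,z]]` and `Ring.inverse` gives its inverse). -/
theorem stmt4 (d : ℕ) (hd : 2 ≤ d) :
    (∀ e : Fin 2 →₀ ℕ, 0 ≤ coeff e (Q d - X 0 * X 1)) ∧
    (∀ e : Fin 2 →₀ ℕ, 0 ≤ coeff e ((1 - X 0 * X 1) * Ring.inverse (1 - Q d))) := by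
  set s : Fin 2 →₀ ℕ := Finsupp.single 0 1 + Finsupp.single 1 1 with hs
  have hs0 : s 0 = 1 := by simp [hs]
  have hs1 : s 1 = 1 := by simp [hs]
  have hXX : (X 0 * X 1 : MvPowerSeries (Fin 2) ℤ) = monomial s 1 := by
    rw [X_def, X_def, monomial_mul_monomial, one_mul]
  have hcXX : ∀ e, coeff e (X 0 * X 1 : MvPowerSeries (Fin 2) ℤ)
      = if e = s then 1 else 0 := by
    intro e; rw [hXX, coeff_monomial, eq_comm]
  have hQs : coeff s (Q d) = (d.choose 2 : ℤ) := by
    rw [coeff_Q, hs0, hs1]; norm_num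
  have hchoose : (1 : ℤ) ≤ (d.choose 2 : ℤ) := by
    have : 1 ≤ d.choose 2 := Nat.one_le_iff_ne_zero.mpr (by
      simp [Nat.choose_eq_zero_iff]; omega)
    exact_mod_cast this
  -- first part
  have part1 : ∀ e : Fin 2 →₀ ℕ, 0 ≤ coeff e (Q d - X 0 * X 1) := by
    intro e
    rw [map_sub, hcXX]
    split
    · next h => subst h; rw [hQs]; linarith
    · simpa using Q_nonneg d e
  refine ⟨part1, ?_⟩
  -- the inverse
  have hUnit : IsUnit (1 - Q d) := by
    rw [isUnit_iff_constantCoeff, map_sub, constantCoeff_Q]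
    simp
  set B := Ring.inverse (1 - Q d) with hB
  have hBmul : (1 - Q d) * B = 1 := Ring.mul_inverse_cancel _ hUnit
  set A := (1 - X 0 * X 1) * B with hA
  have key : A = 1 - X 0 * X 1 + Q d * A := by
    have : (1 - Q d) * A = 1 - X 0 * X 1 := by
      rw [hA, show (1 - Q d) * ((1 - X 0 * X 1) * B)
        = (1 - X 0 * X 1) * ((1 - Q d) * B) by ring, hBmul, mul_one]
    linear_combination this
  have hA0 : coeff 0 A = 1 := by
    have hB0 : constantCoeff B = 1 := by
      have := congrArg (constantCoeff) hBmul
      rw [map_mul, map_sub, map_one, constantCoeff_Q, sub_zero, one_mul] at this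
      simpa using this
    show constantCoeff A = 1
    rw [hA, map_mul, hB0, mul_one, map_sub, map_one]
    rw [hXX]
    rw [show constantCoeff (monomial s (1 : ℤ)) = coeff 0 (monomial s (1 : ℤ)) from rfl,
      coeff_monomial]
    have : s ≠ 0 := by
      intro h
      have := congrArg (fun f => f (0 : Fin 2)) h
      simp [hs0] at this
    simp [Ne.symm this]
  clear_value B A
  have main : ∀ n : ℕ, ∀ e : Fin 2 →₀ ℕ, e 0 + e 1 = n → 0 ≤ coeff e A := by
    intro n
    induction n using Nat.strong_induction_on with
    | _ n ih =>
      intro e he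
      have hcoeff : coeff e A = coeff e (1 : MvPowerSeries (Fin 2) ℤ)
          - coeff e (X 0 * X 1) + coeff e (Q d * A) := by
        conv_lhs => rw [key]
        rw [map_add, map_sub]
      have hterm : ∀ p ∈ Finset.HasAntidiagonal.antidiagonal e,
          0 ≤ coeff p.1 (Q d) * coeff p.2 A := by
        intro p hp
        rcases eq_or_ne (coeff p.1 (Q d)) 0 with h0 | h0
        · rw [h0, zero_mul]
        · have hge : 1 ≤ p.1 0 ∧ 1 ≤ p.1 1 := by
            by_contra hc
            rw [coeff_Q, if_neg hc] at h0; exact h0 rfl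
          have hpe : p.1 + p.2 = e := Finset.HasAntidiagonal.mem_antidiagonal.mp hp
          have h0e : p.1 0 + p.2 0 = e 0 := by rw [← hpe]; simp
          have h1e : p.1 1 + p.2 1 = e 1 := by rw [← hpe]; simp
          have hlt : p.2 0 + p.2 1 < n := by omega
          exact mul_nonneg (Q_nonneg d p.1) (ih _ hlt p.2 rfl)
      rcases eq_or_ne e s with rfl | hes
      · have hmem : (s, (0 : Fin 2 →₀ ℕ)) ∈ Finset.HasAntidiagonal.antidiagonal s :=
          Finset.HasAntidiagonal.mem_antidiagonal.mpr (add_zero s)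
        have hsum : coeff s (Q d) * coeff (0 : Fin 2 →₀ ℕ) A
            ≤ coeff s (Q d * A) := by
          rw [coeff_mul]
          exact Finset.single_le_sum hterm hmem
        rw [hcoeff, coeff_one, hcXX, if_neg (by
          intro h
          have := congrArg (fun f => f (0 : Fin 2)) h
          simp [hs0] at this), if_pos rfl]
        rw [hQs, hA0, mul_one] at hsum
        linarith
      · rw [hcoeff, coeff_one, hcXX, if_neg hes, sub_zero, coeff_mul]
        have := Finset.sum_nonneg hterm
        split <;> linarith
  exact fun e => main (e 0 + e 1) e rfl
end

section
/- For every integer d ≥ 1, define H(d) = P_d·(1 − Q_d)⁻¹ in ℤ[[y,z]], where P_d = Σ_{i,j ≥ 0} C(d−1, i+j+1) yⁱzʲ and Q_d = Σ_{i,j ≥ 1} C(d, i+j) yⁱzʲ. Then H(d) has all coefficients nonnegative, and (1 − yz)·H(d) has all coefficients nonnegative; equivalently, for all p, q ≥ 0 the coefficient of y^{p+1}z^{q+1} in H(d) is at least the coefficient of y^p z^q in H(d). -/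
open MvPowerSeries

/-- `P_d = Σ_{i,j ≥ 0} C(d-1, i+j+1) yⁱzʲ` as a power series in `ℤ[[y,z]]`. -/
def P (d : ℕ) : MvPowerSeries (Fin 2) ℤ :=
  fun e => ((d - 1).choose (e 0 + e 1 + 1) : ℤ)

/-- `H(d) = P_d · (1 - Q_d)⁻¹` (`1 - Q_d` is a unit of `ℤ[[y,z]]`, and
`Ring.inverse` gives its inverse). -/
noncomputable def H (d : ℕ) : MvPowerSeries (Fin 2) ℤ := P d * Ring.inverse (1 - Q d)

lemma coeff_P (d : ℕ) (e : Fin 2 →₀ ℕ) :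
    coeff e (P d) = ((d - 1).choose (e 0 + e 1 + 1) : ℤ) := rfl

lemma isUnit_one_sub_Q (d : ℕ) : IsUnit (1 - Q d) := by
  rw [isUnit_iff_constantCoeff]
  have : constantCoeff (Q d) = 0 := by
    rw [← coeff_zero_eq_constantCoeff_apply, coeff_Q]; simp
  rw [map_sub, map_one, this, sub_zero]
  exact isUnit_one

lemma Qinv_eq (d : ℕ) :
    Ring.inverse (1 - Q d) = 1 + Q d * Ring.inverse (1 - Q d) := by
  have h := Ring.mul_inverse_cancel (1 - Q d) (isUnit_one_sub_Q d)
  linear_combination h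

lemma Qinv_nonneg (d : ℕ) (e : Fin 2 →₀ ℕ) :
    0 ≤ coeff e (Ring.inverse (1 - Q d)) := by
  suffices h : ∀ n, ∀ e : Fin 2 →₀ ℕ, e 0 + e 1 ≤ n →
      0 ≤ coeff e (Ring.inverse (1 - Q d)) from h (e 0 + e 1) e le_rfl
  intro n
  induction n using Nat.strong_induction_on with
  | _ n ih =>
    intro e he
    rw [Qinv_eq, map_add, coeff_mul]
    refine add_nonneg ?_ (Finset.sum_nonneg fun p hp => ?_)
    · rw [coeff_one]; split <;> norm_num
    · by_cases h : 1 ≤ p.1 0 ∧ 1 ≤ p.1 1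
      · have hpe : p.1 + p.2 = e := Finset.HasAntidiagonal.mem_antidiagonal.mp hp
        have h0 : p.1 0 + p.2 0 = e 0 := by rw [← hpe]; simp
        have h1 : p.1 1 + p.2 1 = e 1 := by rw [← hpe]; simp
        exact mul_nonneg (Q_nonneg d p.1) (ih (p.2 0 + p.2 1) (by omega) p.2 le_rfl)
      · have : coeff p.1 (Q d) = 0 := by rw [coeff_Q, if_neg h]
        rw [this, zero_mul]

lemma coeff_mul_nonneg {F G : MvPowerSeries (Fin 2) ℤ}
    (hF : ∀ e, 0 ≤ coeff e F) (hG : ∀ e, 0 ≤ coeff e G) (e : Fin 2 →₀ ℕ) :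
    0 ≤ coeff e (F * G) := by
  rw [coeff_mul]
  exact Finset.sum_nonneg fun p _ => mul_nonneg (hF _) (hG _)

lemma P_nonneg (d : ℕ) (e : Fin 2 →₀ ℕ) : 0 ≤ coeff e (P d) := by
  rw [coeff_P]; positivity

lemma coeff_X_mul' (s : Fin 2) (F : MvPowerSeries (Fin 2) ℤ) (e : Fin 2 →₀ ℕ) :
    coeff e (X s * F) =
      if 1 ≤ e s then coeff (e - Finsupp.single s 1) F else 0 := by
  rw [X, coeff_monomial_mul]
  simp [Finsupp.single_le_iff]


lemma eq_zero_iff (e : Fin 2 →₀ ℕ) : e = 0 ↔ e 0 = 0 ∧ e 1 = 0 := by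
  constructor
  · intro h; simp [h]
  · rintro ⟨h0, h1⟩; ext s; fin_cases s <;> simpa

lemma key_identity (k : ℕ) :
    (1 - X 0 * X 1) * P (k+2) =
      (1 - Q (k+2)) + (1 + X 0) * ((1 + X 1) * P (k+1)) := by
  ext e
  rw [sub_mul, one_mul, mul_assoc, add_mul, one_mul, add_mul, one_mul, mul_add]
  simp only [map_sub, map_add, coeff_X_mul', coeff_P, coeff_Q, coeff_one,
    eq_zero_iff, Finsupp.coe_tsub, Pi.sub_apply, Finsupp.single_eq_same,
    Finsupp.single_eq_of_ne (by decide : (0:Fin 2) ≠ 1),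
    Finsupp.single_eq_of_ne (by decide : (1:Fin 2) ≠ 0), Nat.sub_zero,
    show k + 2 - 1 = k + 1 from rfl, show k + 1 - 1 = k from rfl]
  rcases Nat.eq_zero_or_pos (e 0) with h0 | h0 <;>
    rcases Nat.eq_zero_or_pos (e 1) with h1 | h1
  · simp [h0, h1, Nat.choose_one_right]; push_cast; ring
  · obtain ⟨q, hq⟩ : ∃ q, e 1 = q + 1 := ⟨e 1 - 1, by omega⟩
    simp [h0, hq, Nat.add_sub_cancel]
    rw [Nat.choose_succ_succ]; push_cast; ring
  · obtain ⟨p, hp⟩ : ∃ p, e 0 = p + 1 := ⟨e 0 - 1, by omega⟩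
    simp [h1, hp, Nat.add_sub_cancel]
    rw [Nat.choose_succ_succ]; push_cast; ring
  · obtain ⟨p, hp⟩ : ∃ p, e 0 = p + 1 := ⟨e 0 - 1, by omega⟩
    obtain ⟨q, hq⟩ : ∃ q, e 1 = q + 1 := ⟨e 1 - 1, by omega⟩
    simp only [hp, hq, Nat.add_sub_cancel, if_pos (Nat.succ_le_succ p.zero_le),
      if_pos (Nat.succ_le_succ q.zero_le), if_pos (show 1 ≤ p+1 ∧ 1 ≤ q+1 from ⟨Nat.succ_le_succ p.zero_le, Nat.succ_le_succ q.zero_le⟩),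
      if_neg (by omega : ¬(p + 1 = 0 ∧ q + 1 = 0))]
    rw [show p+1+(q+1)+1 = (p+q+2)+1 from by ring, show p+1+(q+1) = (p+q+1)+1 from by ring,
      show p+1+q+1 = (p+q+1)+1 from by ring, show p+(q+1)+1 = (p+q+1)+1 from by ring]
    have e1 : ((k+1).choose ((p+q+2)+1) : ℤ) = k.choose (p+q+2) + k.choose (p+q+3) := by
      rw [Nat.choose_succ_succ]; push_cast; ring
    have e2 : ((k+2).choose ((p+q+1)+1) : ℤ) = (k+1).choose (p+q+1) + (k+1).choose (p+q+2) := by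
      rw [Nat.choose_succ_succ]; push_cast; ring
    have e3 : ((k+1).choose (p+q+1) : ℤ) = k.choose (p+q) + k.choose (p+q+1) := by
      rw [show p+q+1 = (p+q)+1 from rfl, Nat.choose_succ_succ]; push_cast; ring
    have e4 : ((k+1).choose (p+q+2) : ℤ) = k.choose (p+q+1) + k.choose (p+q+2) := by
      rw [show p+q+2 = (p+q+1)+1 from rfl, Nat.choose_succ_succ]; push_cast; ring
    have e5 : ((k+1).choose ((p+q+1)+1) : ℤ) = k.choose (p+q+1) + k.choose (p+q+2) := by
      rw [Nat.choose_succ_succ]; push_cast; ring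
    rw [e1, e2]
    simp only [show p+q+2+1 = p+q+3 from rfl, show p+q+1+1 = p+q+2 from rfl]
    linarith [e3, e4, e5]

lemma one_add_X_nonneg (s : Fin 2) (e : Fin 2 →₀ ℕ) :
    0 ≤ coeff e (1 + X s : MvPowerSeries (Fin 2) ℤ) := by
  rw [map_add, coeff_one, coeff_X]
  split <;> split <;> norm_num

/-- For `d ≥ 1`, `H(d)` has nonnegative coefficients and `(1 - yz)·H(d)` has
nonnegative coefficients, i.e. the coefficient of `y^{p+1}z^{q+1}` in `H(d)` is at
least the coefficient of `y^p z^q`. -/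
theorem stmt5 (d : ℕ) (hd : 1 ≤ d) :
    (∀ e : Fin 2 →₀ ℕ, 0 ≤ coeff e (H d)) ∧
    (∀ e : Fin 2 →₀ ℕ, 0 ≤ coeff e ((1 - X 0 * X 1) * H d)) := by
  constructor
  · intro e
    exact coeff_mul_nonneg (P_nonneg d) (Qinv_nonneg d) e
  · intro e
    rcases eq_or_lt_of_le hd with h1 | h2
    · obtain rfl : d = 1 := h1.symm
      have hP : P 1 = 0 := by
        ext e'
        rw [coeff_P]
        norm_num
      simp [H, hP]
    · obtain ⟨k, rfl⟩ : ∃ k, d = k + 2 := ⟨d - 2, by omega⟩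
      have h := Ring.mul_inverse_cancel _ (isUnit_one_sub_Q (k+2))
      have hrw : (1 - X 0 * X 1) * H (k+2)
          = 1 + (1 + X 0) * ((1 + X 1) * (P (k+1) * Ring.inverse (1 - Q (k+2)))) := by
        calc (1 - X 0 * X 1) * H (k+2)
            = ((1 - X 0 * X 1) * P (k+2)) * Ring.inverse (1 - Q (k+2)) := by
              rw [H, mul_assoc]
          _ = ((1 - Q (k+2)) + (1 + X 0) * ((1 + X 1) * P (k+1))) *
                Ring.inverse (1 - Q (k+2)) := by rw [key_identity]
          _ = 1 + (1 + X 0) * ((1 + X 1) * (P (k+1) * Ring.inverse (1 - Q (k+2)))) := by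
              rw [add_mul, h]; ring
      rw [hrw, map_add]
      refine add_nonneg ?_ ?_
      · rw [coeff_one]; split <;> norm_num
      · exact coeff_mul_nonneg (one_add_X_nonneg 0)
          (coeff_mul_nonneg (one_add_X_nonneg 1)
            (coeff_mul_nonneg (P_nonneg _) (Qinv_nonneg _))) e
end
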